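/- Let p > 3 be a prime, m a positive integer, and n = 2m, and suppose p^m ≡ 1 (mod 3). Then for every c ∈ F_{p^n}, the number of y ∈ F_{p^n} satisfying 8y·y^{p^m} + 4y^2 - c = 0 is not equal to 4. -/
import Mathlib

section KeyLemma

variable {K : Type*} [Field K]

lemma key_lemma (σ : K →+* K) (r s1 d1 s2 d2 : K)
    (h2 : (2 : K) ≠ 0) (h3 : (3 : K) ≠ 0) (hr2 : r ^ 2 = -3) (hσr : σ r = r)
    (hs1 : σ s1 = s1) (hs2 : σ s2 = s2) (hd1 : σ d1 = -d1) (hd2 : σ d2 = -d2)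
    (E1 : s1 * d1 = s2 * d2) (E2 : 3 * s1 ^ 2 - d1 ^ 2 = 3 * s2 ^ 2 - d2 ^ 2) :
    (s2 = s1 ∧ d2 = d1) ∨ (s2 = -s1 ∧ d2 = -d1) := by
  have L1 : ∀ d e : K, σ d = -d → σ e = e → d ^ 2 = e ^ 2 → d = 0 := by
    intro d e hd he h
    have h' : (d - e) * (d + e) = 0 := by linear_combination h
    have hdd : σ d = d := by
      rcases mul_eq_zero.mp h' with h0 | h0
      · have hde : d = e := sub_eq_zero.mp h0
        rw [hde]; exact he
      · have hde : d = -e := eq_neg_of_add_eq_zero_left h0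
        rw [hde, map_neg, he]
    have hdn : d = -d := by rw [← hd, hdd]
    have h2d : 2 * d = 0 := by linear_combination hdn
    exact (mul_eq_zero.mp h2d).resolve_left h2
  have L2 : ∀ t d : K, σ t = t → σ d = -d → 3 * t ^ 2 + d ^ 2 = 0 → t = 0 ∧ d = 0 := by
    intro t d ht hd h
    have hd2 : d ^ 2 = (r * t) ^ 2 := by linear_combination h - t ^ 2 * hr2
    have hd0 : d = 0 := L1 d (r * t) hd (by rw [map_mul, hσr, ht]) hd2
    refine ⟨?_, hd0⟩
    have h3t : 3 * t ^ 2 = 0 := by rw [hd0] at h; linear_combination h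
    have := (mul_eq_zero.mp h3t).resolve_left h3
    exact pow_eq_zero_iff (two_ne_zero) |>.mp this
  have both_s_zero : s1 = 0 → s2 = 0 → (s2 = s1 ∧ d2 = d1) ∨ (s2 = -s1 ∧ d2 = -d1) := by
    intro hs10 hs20
    have hd : (d2 - d1) * (d2 + d1) = 0 := by
      linear_combination E2 - 3 * s1 * hs10 + 3 * s2 * hs20
    rcases mul_eq_zero.mp hd with h0 | h0
    · exact Or.inl ⟨by rw [hs20, hs10], sub_eq_zero.mp h0⟩
    · exact Or.inr ⟨by rw [hs20, hs10, neg_zero], eq_neg_of_add_eq_zero_left h0⟩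
  have factored : (3 * s1 * s2 + d1 * d2) * (s1 * d2 - s2 * d1) = 0 := by
    linear_combination (d1 ^ 2 - 3 * s1 ^ 2) * E1 + (s1 * d1) * E2
  rcases mul_eq_zero.mp factored with hI | hII
  · -- Case I : 3 s1 s2 + d1 d2 = 0
    have key0 : 3 * (s1 * s2) ^ 2 + (s1 * d1) ^ 2 = 0 := by
      linear_combination (s1 * d1) * E1 + (s1 * s2) * hI
    obtain ⟨hss, hsd⟩ := L2 (s1 * s2) (s1 * d1)
      (by rw [map_mul, hs1, hs2]) (by rw [map_mul, hs1, hd1, mul_neg]) key0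
    rcases mul_eq_zero.mp hss with hs10 | hs20
    · have hs2d2 : s2 * d2 = 0 := by rw [← E1, hs10, zero_mul]
      rcases mul_eq_zero.mp hs2d2 with hs20 | hd20
      · exact both_s_zero hs10 hs20
      · have h32 : 3 * s2 ^ 2 + d1 ^ 2 = 0 := by
          linear_combination -E2 + 3 * s1 * hs10 + d2 * hd20
        obtain ⟨hs2z, hd1z⟩ := L2 s2 d1 hs2 hd1 h32
        exact Or.inl ⟨by rw [hs2z, hs10], by rw [hd20, hd1z]⟩
    · rcases mul_eq_zero.mp hsd with hs10 | hd10
      · exact both_s_zero hs10 hs20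
      · have h31 : 3 * s1 ^ 2 + d2 ^ 2 = 0 := by
          linear_combination E2 + d1 * hd10 + 3 * s2 * hs20
        obtain ⟨hs1z, hd2z⟩ := L2 s1 d2 hs1 hd2 h31
        exact Or.inl ⟨by rw [hs20, hs1z], by rw [hd2z, hd10]⟩
  · -- Case II : s1 d2 = s2 d1
    have hprod : (d1 * d2) * ((s1 - s2) * (s1 + s2)) = 0 := by
      linear_combination (s1 * d2) * E1 + (s2 * d2) * hII
    rcases mul_eq_zero.mp hprod with hdd | hss
    · rcases mul_eq_zero.mp hdd with hd10 | hd20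
      · -- d1 = 0
        have hs2d2 : s2 * d2 = 0 := by rw [← E1, hd10, mul_zero]
        rcases mul_eq_zero.mp hs2d2 with hs20 | hd20
        · have h31 : 3 * s1 ^ 2 + d2 ^ 2 = 0 := by
            linear_combination E2 + d1 * hd10 + 3 * s2 * hs20
          obtain ⟨hs1z, hd2z⟩ := L2 s1 d2 hs1 hd2 h31
          exact Or.inl ⟨by rw [hs20, hs1z], by rw [hd2z, hd10]⟩
        · have hsq3 : 3 * ((s2 - s1) * (s2 + s1)) = 0 := by
            linear_combination -E2 - d1 * hd10 + d2 * hd20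
          have hsq : (s2 - s1) * (s2 + s1) = 0 :=
            (mul_eq_zero.mp hsq3).resolve_left h3
          rcases mul_eq_zero.mp hsq with h0 | h0
          · exact Or.inl ⟨sub_eq_zero.mp h0, by rw [hd20, hd10]⟩
          · exact Or.inr ⟨eq_neg_of_add_eq_zero_left h0, by rw [hd20, hd10, neg_zero]⟩
      · -- d2 = 0
        have hs1d1 : s1 * d1 = 0 := by rw [E1, hd20, mul_zero]
        rcases mul_eq_zero.mp hs1d1 with hs10 | hd10
        · have h32 : 3 * s2 ^ 2 + d1 ^ 2 = 0 := by
            linear_combination -E2 + 3 * s1 * hs10 + d2 * hd20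
          obtain ⟨hs2z, hd1z⟩ := L2 s2 d1 hs2 hd1 h32
          exact Or.inl ⟨by rw [hs2z, hs10], by rw [hd20, hd1z]⟩
        · have hsq3 : 3 * ((s2 - s1) * (s2 + s1)) = 0 := by
            linear_combination -E2 - d1 * hd10 + d2 * hd20
          have hsq : (s2 - s1) * (s2 + s1) = 0 :=
            (mul_eq_zero.mp hsq3).resolve_left h3
          rcases mul_eq_zero.mp hsq with h0 | h0
          · exact Or.inl ⟨sub_eq_zero.mp h0, by rw [hd20, hd10]⟩
          · exact Or.inr ⟨eq_neg_of_add_eq_zero_left h0, by rw [hd20, hd10, neg_zero]⟩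
    · rcases mul_eq_zero.mp hss with h0 | h0
      · -- s1 = s2
        have hmul : s1 * (d1 - d2) = 0 := by linear_combination E1 - d2 * h0
        rcases mul_eq_zero.mp hmul with hs10 | hdd
        · have hs20 : s2 = 0 := by linear_combination -h0 + hs10
          exact both_s_zero hs10 hs20
        · exact Or.inl ⟨(sub_eq_zero.mp h0).symm, (sub_eq_zero.mp hdd).symm⟩
      · -- s1 = -s2
        have hmul : s2 * (d1 + d2) = 0 := by linear_combination -(1:K) * E1 + d1 * h0
        rcases mul_eq_zero.mp hmul with hs20 | hdd
        · have hs10 : s1 = 0 := by linear_combination h0 - hs20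
          exact both_s_zero hs10 hs20
        · exact Or.inr ⟨by linear_combination h0, by linear_combination hdd⟩

end KeyLemma

/-- Let `p > 3` be prime, `n = 2m`, `p^m ≡ 1 (mod 3)`. For every `c` in `F_{p^n}`,
the equation `8·y·y^(p^m) + 4·y² - c = 0` does not have exactly four solutions `y`. -/
theorem stmt13 (p : ℕ) (hp : p.Prime) (hp3 : 3 < p) (m : ℕ) (hm : 0 < m) (n : ℕ)
    (hn : n = 2 * m) (hmod : p ^ m % 3 = 1)
    (F : Type*) [Field F] [Fintype F] [DecidableEq F]
    (hF : Fintype.card F = p ^ n) :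
    ∀ c : F,
      (Finset.univ.filter (fun y : F => 8 * y * y ^ p ^ m + 4 * y ^ 2 - c = 0)).card ≠ 4 := by
  haveI hfact : Fact p.Prime := ⟨hp⟩
  -- characteristic
  haveI hchar : CharP F p := by
    have h1 : (ringChar F).Prime := CharP.char_is_prime F (ringChar F)
    obtain ⟨k, -, hk⟩ := FiniteField.card F (ringChar F)
    have hdvd : ringChar F ∣ p ^ n := by
      rw [← hF, hk]; exact dvd_pow_self _ k.ne_zero
    have heq := (Nat.prime_dvd_prime_iff_eq h1 hp).mp (h1.dvd_of_dvd_pow hdvd)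
    exact heq ▸ ringChar.charP F
  -- the Frobenius x ↦ x^(p^m)
  set φ : F →+* F := iterateFrobenius F p m with hφdef
  have hφ : ∀ x : F, φ x = x ^ p ^ m := fun _ => rfl
  have hφφ : ∀ x : F, φ (φ x) = x := by
    intro x
    have hqq : p ^ m * p ^ m = p ^ n := by rw [hn, two_mul, pow_add]
    rw [hφ, hφ, ← pow_mul, hqq, ← hF, FiniteField.pow_card]
  have h2 : (2 : F) ≠ 0 := by
    have : ¬ (p ∣ 2) := fun h => by have := Nat.le_of_dvd two_pos h; omega
    simpa using fun h => this ((CharP.cast_eq_zero_iff F p 2).mp (by exact_mod_cast h))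
  have h3 : (3 : F) ≠ 0 := by
    have : ¬ (p ∣ 3) := fun h => by have := Nat.le_of_dvd three_pos h; omega
    simpa using fun h => this ((CharP.cast_eq_zero_iff F p 3).mp (by exact_mod_cast h))
  -- a square root of -3 fixed by φ
  haveI : Fact (Nat.Prime 3) := ⟨by norm_num⟩
  have hcard3 : 3 ∣ Fintype.card Fˣ := by
    rw [Fintype.card_units, hF]
    have hpn : p ^ n % 3 = 1 := by rw [hn, two_mul, pow_add, Nat.mul_mod, hmod]
    have hpos : 0 < p ^ n := pow_pos hp.pos n
    omega
  obtain ⟨ζ, hζ⟩ := exists_prime_orderOf_dvd_card (G := Fˣ) 3 hcard3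
  set ω : F := (ζ : F) with hωdef
  have hω3 : ω ^ 3 = 1 := by
    have hz : ζ ^ 3 = 1 := by rw [← hζ]; exact pow_orderOf_eq_one ζ
    have := congrArg (Units.val) hz
    simpa [hωdef] using this
  have hω1 : ω ≠ 1 := by
    intro h
    have hz : ζ = 1 := Units.ext h
    rw [hz, orderOf_one] at hζ
    norm_num at hζ
  have hωsum : ω ^ 2 + ω + 1 = 0 := by
    have hfac : (ω - 1) * (ω ^ 2 + ω + 1) = 0 := by linear_combination hω3
    exact (mul_eq_zero.mp hfac).resolve_left (sub_ne_zero.mpr hω1)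
  have hσω : φ ω = ω := by
    rw [hφ]
    conv_lhs => rw [show p ^ m = 3 * (p ^ m / 3) + 1 by omega]
    rw [pow_add, pow_mul, hω3, one_pow, pow_one, one_mul]
  set r : F := 2 * ω + 1 with hrdef
  have hr2 : r ^ 2 = -3 := by rw [hrdef]; linear_combination 4 * hωsum
  have hσr : φ r = r := by
    rw [hrdef, map_add, map_mul, map_one, map_ofNat, hσω]
  -- main argument
  intro c hcard4
  set S := Finset.univ.filter (fun y : F => 8 * y * y ^ p ^ m + 4 * y ^ 2 - c = 0) with hS
  have hne : S.Nonempty := Finset.card_pos.mp (by omega)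
  obtain ⟨u, hu⟩ := hne
  have hueq : 8 * u * φ u + 4 * u ^ 2 - c = 0 := by
    have := (Finset.mem_filter.mp hu).2
    rwa [← hφ] at this
  have hsub : S ⊆ {u, -u} := by
    intro v hv
    have hveq : 8 * v * φ v + 4 * v ^ 2 - c = 0 := by
      have := (Finset.mem_filter.mp hv).2
      rwa [← hφ] at this
    have h : 8 * u * φ u + 4 * u ^ 2 = 8 * v * φ v + 4 * v ^ 2 := by
      linear_combination hueq - hveq
    have h' : 8 * φ u * u + 4 * (φ u) ^ 2 = 8 * φ v * v + 4 * (φ v) ^ 2 := by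
      have hc := congrArg φ h
      simpa [map_add, map_mul, map_pow, map_ofNat, hφφ] using hc
    have h4 : (4 : F) ≠ 0 := by
      have h44 : (4 : F) = 2 * 2 := by norm_num
      rw [h44]; exact mul_ne_zero h2 h2
    have E1 : (u + φ u) * (u - φ u) = (v + φ v) * (v - φ v) := by
      have hx : 4 * ((u + φ u) * (u - φ u)) = 4 * ((v + φ v) * (v - φ v)) := by
        linear_combination h - h'
      exact mul_left_cancel₀ h4 hx
    have E2 : 3 * (u + φ u) ^ 2 - (u - φ u) ^ 2
        = 3 * (v + φ v) ^ 2 - (v - φ v) ^ 2 := by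
      have hx : 2 * (3 * (u + φ u) ^ 2 - (u - φ u) ^ 2)
          = 2 * (3 * (v + φ v) ^ 2 - (v - φ v) ^ 2) := by
        linear_combination h + h'
      exact mul_left_cancel₀ h2 hx
    have hk := key_lemma φ r (u + φ u) (u - φ u) (v + φ v) (v - φ v) h2 h3 hr2 hσr
      (by rw [map_add, hφφ]; ring) (by rw [map_add, hφφ]; ring)
      (by rw [map_sub, hφφ]; ring) (by rw [map_sub, hφφ]; ring) E1 E2
    rcases hk with ⟨hseq, hdeq⟩ | ⟨hseq, hdeq⟩
    · have hvu : v = u := by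
        have h2v : 2 * v = 2 * u := by linear_combination hseq + hdeq
        exact mul_left_cancel₀ h2 h2v
      simp [hvu]
    · have hvu : v = -u := by
        have h2v : 2 * v = 2 * (-u) := by linear_combination hseq + hdeq
        exact mul_left_cancel₀ h2 h2v
      simp [hvu]
  have hle := Finset.card_le_card hsub
  have hle2 : ({u, -u} : Finset F).card ≤ 2 :=
    (Finset.card_insert_le _ _).trans (by simp)
  omega
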